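/- (Sign of the topography correction term in the partially wet case.) Let z_i ≥ z_{i+1} and min(w_i, w_{i+1}) ≤ max(z_i, z_{i+1}), with w_i = y_i + z_i, w_{i+1} = y_{i+1} + z_{i+1}, y_i, y_{i+1} ≥ 0, and additionally w_{i+1} ≤ w_i. Define z_half = min(max(z_i, z_{i+1}), min(w_i, w_{i+1})) = w_{i+1}, y⁻ = min(w_i − z_half, y_i), y⁺ = min(w_{i+1} − z_half, y_{i+1}) = 0, w± = y± + z_half. Then (y⁺ − y⁻)·((w⁺ + w⁻)/2 − w_i) ≥ 0. -/
import Mathlib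

/-- Sign of the topography correction term in the partially wet case (left bottom higher). -/
theorem topography_correction_partially_wet (zi zi1 yi yi1 : ℝ)
    (hyi : 0 ≤ yi) (hyi1 : 0 ≤ yi1) (hz : zi1 ≤ zi)
    (hdry : min (yi + zi) (yi1 + zi1) ≤ max zi zi1)
    (hw : yi1 + zi1 ≤ yi + zi) :
    let wi := yi + zi
    let wi1 := yi1 + zi1
    let zh := min (max zi zi1) (min wi wi1)
    let ym := min (wi - zh) yi
    let yp := min (wi1 - zh) yi1
    let wm := ym + zh
    let wp := yp + zh
    0 ≤ (yp - ym) * ((wp + wm) / 2 - wi) := by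
  simp only
  rw [max_eq_left hz, min_eq_right hw] at *
  rw [min_eq_right hdry]
  have h1 : min (yi1 + zi1 - (yi1 + zi1)) yi1 = 0 := by
    simp [min_eq_left hyi1]
  rw [h1]
  rcases min_cases (yi + zi - (yi1 + zi1)) yi with ⟨he, hle⟩ | ⟨he, hle⟩ <;> rw [he] <;> nlinarith
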